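/- arXiv:2002.11286 — 7 statements merged into one kernel-verified Lean document; each statement's English description precedes it below -/
import Mathlib

section
/- Let ε > 0, A > 0, and let p < 0. Then the equation A·Π_ε(H) = p has exactly one solution H in (0, ∞), and this solution lies in the interval (0, ε). -/
/-- The disjoining pressure `Π_ε(h) = ε²/h³ − ε³/h⁴`. -/
noncomputable def disjoiningPressure (ε h : ℝ) : ℝ := ε^2 / h^3 - ε^3 / h^4

lemma dp_strictMonoOn (ε A : ℝ) (hε : 0 < ε) (hA : 0 < A) :
    StrictMonoOn (fun h => A * disjoiningPressure ε h) (Set.Ioc 0 ε) := by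
  intro a ha b hb hab
  have ha0 : 0 < a := ha.1
  have hb0 : 0 < b := hb.1
  have hbe : b ≤ ε := hb.2
  simp only [disjoiningPressure]
  have key : ε^2 / a^3 - ε^3 / a^4 < ε^2 / b^3 - ε^3 / b^4 := by
    rw [div_sub_div _ _ (by positivity : (a:ℝ)^3 ≠ 0) (by positivity : (a:ℝ)^4 ≠ 0),
        div_sub_div _ _ (by positivity : (b:ℝ)^3 ≠ 0) (by positivity : (b:ℝ)^4 ≠ 0),
        div_lt_div_iff₀ (by positivity) (by positivity)]
    have hd : a * b * (b^3 - a^3) < ε * (b^4 - a^4) := by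
      nlinarith [mul_pos ha0 hb0, pow_pos hb0 4, pow_pos hb0 3,
        mul_nonneg (sub_nonneg.2 hbe) (sub_nonneg.2 (pow_le_pow_left₀ ha0.le hab.le 4)),
        mul_pos (pow_pos hb0 4) (sub_pos.2 hab)]
    have hprod := mul_lt_mul_of_pos_left hd (by positivity : (0:ℝ) < a^3 * b^3 * ε^2)
    nlinarith [hprod]
  exact mul_lt_mul_of_pos_left key hA

theorem stmt_4 (ε A p : ℝ) (hε : 0 < ε) (hA : 0 < A) (hp : p < 0) :
    ∃ H ∈ Set.Ioo (0:ℝ) ε, A * disjoiningPressure ε H = p ∧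
      ∀ H' : ℝ, 0 < H' → A * disjoiningPressure ε H' = p → H' = H := by
  set f : ℝ → ℝ := fun h => A * disjoiningPressure ε h with hf
  -- value at ε is 0
  have hfε : f ε = 0 := by
    simp only [hf, disjoiningPressure]
    field_simp
    ring
  -- choose T large
  set T : ℝ := max 2 (1 + (-p) * ε / A) with hT
  have hT2 : (2:ℝ) ≤ T := le_max_left _ _
  have hT1 : (1:ℝ) < T := lt_of_lt_of_le one_lt_two hT2
  have hTp : 1 + (-p) * ε / A ≤ T := le_max_right _ _
  set h₀ : ℝ := ε / T with hh0
  have hh0pos : 0 < h₀ := div_pos hε (by linarith)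
  have hh0lt : h₀ < ε := by
    rw [hh0, div_lt_iff₀ (by linarith : (0:ℝ) < T)]
    nlinarith
  -- f h₀ ≤ p
  have hfh0 : f h₀ ≤ p := by
    have hTpos : (0:ℝ) < T := by linarith
    have : f h₀ = A * (T^3 * (1 - T)) / ε := by
      simp only [hf, disjoiningPressure, hh0]
      field_simp
    rw [this]
    rw [div_le_iff₀ hε]
    have h1 : -p * ε / A ≤ T - 1 := by linarith
    have h2 : -p * ε ≤ A * (T - 1) := by
      rw [div_le_iff₀ hA] at h1; linarith
    have h3 : (1:ℝ) ≤ T^3 := one_le_pow₀ hT1.le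
    nlinarith [mul_pos hA (by linarith : (0:ℝ) < T - 1)]
  -- continuity on Icc h₀ ε
  have hcont : ContinuousOn f (Set.Icc h₀ ε) := by
    apply ContinuousOn.mul continuousOn_const
    have hne : ∀ x ∈ Set.Icc h₀ ε, x ≠ 0 :=
      fun x hx => ne_of_gt (lt_of_lt_of_le hh0pos hx.1)
    apply ContinuousOn.sub
    · exact ContinuousOn.div continuousOn_const ((continuous_pow 3).continuousOn)
        (fun x hx => pow_ne_zero 3 (hne x hx))
    · exact ContinuousOn.div continuousOn_const ((continuous_pow 4).continuousOn)
        (fun x hx => pow_ne_zero 4 (hne x hx))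
  obtain ⟨H, hHmem, hHeq⟩ := intermediate_value_Icc (le_of_lt hh0lt) hcont
    (Set.mem_Icc.mpr ⟨hfh0, by rw [hfε]; linarith⟩)
  have hH0 : 0 < H := lt_of_lt_of_le hh0pos hHmem.1
  have hHne : H ≠ ε := fun h => by rw [h, hfε] at hHeq; linarith
  have hHlt : H < ε := lt_of_le_of_ne hHmem.2 hHne
  have hmono := dp_strictMonoOn ε A hε hA
  refine ⟨H, ⟨hH0, hHlt⟩, hHeq, ?_⟩
  intro H' hH'0 hH'eq
  -- H' < ε since for H' ≥ ε, f H' ≥ 0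
  have hH'lt : H' ≤ ε := by
    by_contra hc
    push_neg at hc
    have : 0 ≤ disjoiningPressure ε H' := by
      have hne : H' ≠ 0 := ne_of_gt hH'0
      have : disjoiningPressure ε H' = ε^2 * (H' - ε) / H'^4 := by
        simp only [disjoiningPressure]
        field_simp
      rw [this]
      have h4 : (0:ℝ) < H'^4 := by positivity
      exact div_nonneg (by nlinarith) (le_of_lt h4)
    nlinarith [mul_nonneg (le_of_lt hA) this]
  have hHeq' : A * disjoiningPressure ε H = p := hHeq
  exact hmono.injOn ⟨hH'0, hH'lt⟩ ⟨hH0, le_of_lt hHlt⟩ (hH'eq.trans hHeq'.symm)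
end

section
/- Let ε > 0 and A > 0. For each p < 0 let H(p) denote the unique solution in (0, ε) of A·Π_ε(H) = p. Then H(p)·|p|^{1/4} → ε^{3/4}·A^{1/4} as p → −∞; that is, H(p) ~ ε^{3/4}(A/|p|)^{1/4} in the limit p → −∞. -/
theorem stmt_5 (ε A : ℝ) (hε : 0 < ε) (hA : 0 < A) (H : ℝ → ℝ)
    (hH : ∀ p : ℝ, p < 0 →
      H p ∈ Set.Ioo (0:ℝ) ε ∧ A * disjoiningPressure ε (H p) = p) :
    Filter.Tendsto (fun p : ℝ => H p * |p| ^ ((1:ℝ)/4)) Filter.atBot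
      (nhds (ε ^ ((3:ℝ)/4) * A ^ ((1:ℝ)/4))) := by
  -- Key algebraic identity: for p < 0, (H p)^4 * (-p) = A*ε^3 - A*ε^2 * H p
  have key : ∀ p : ℝ, p < 0 → (H p)^4 * (-p) = A*ε^3 - A*ε^2 * H p := by
    intro p hp
    obtain ⟨⟨h0, h1⟩, heq⟩ := hH p hp
    have hne : H p ≠ 0 := ne_of_gt h0
    unfold disjoiningPressure at heq
    field_simp at heq
    nlinarith [pow_pos h0 4, pow_pos h0 3]
  -- H p → 0 as p → -∞
  have hHle : ∀ p : ℝ, p < 0 → H p ≤ (A*ε^3) ^ ((1:ℝ)/4) * (-p) ^ (-(1:ℝ)/4) := by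
    intro p hp
    obtain ⟨⟨h0, h1⟩, _⟩ := hH p hp
    have hk := key p hp
    have hnp : 0 < -p := by linarith
    have h4 : (H p)^4 ≤ A*ε^3 / (-p) := by
      rw [le_div_iff₀ hnp]
      nlinarith [mul_pos (mul_pos hA (mul_pos hε hε)) h0]
    have : ((H p)^4) ^ ((1:ℝ)/4) ≤ (A*ε^3 / (-p)) ^ ((1:ℝ)/4) :=
      Real.rpow_le_rpow (by positivity) h4 (by norm_num)
    have hL : ((H p)^4) ^ ((1:ℝ)/4) = H p := by
      rw [← Real.rpow_natCast (H p) 4, ← Real.rpow_mul h0.le]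
      norm_num
    have hR : (A*ε^3 / (-p)) ^ ((1:ℝ)/4)
        = (A*ε^3) ^ ((1:ℝ)/4) * (-p) ^ (-(1:ℝ)/4) := by
      rw [Real.div_rpow (by positivity) hnp.le, div_eq_mul_inv,
        ← Real.rpow_neg hnp.le]
      norm_num
    rw [hL, hR] at this
    exact this
  have hH0 : Filter.Tendsto (fun p => H p) Filter.atBot (nhds 0) := by
    have hub : Filter.Tendsto
        (fun p : ℝ => (A*ε^3) ^ ((1:ℝ)/4) * (-p) ^ (-(1:ℝ)/4))
        Filter.atBot (nhds 0) := by
      have h1 : Filter.Tendsto (fun x : ℝ => x ^ (-(1:ℝ)/4)) Filter.atTop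
          (nhds 0) := by
        have := tendsto_rpow_neg_atTop (y := (1:ℝ)/4) (by norm_num)
        simpa [neg_div] using this
      have h2 : Filter.Tendsto (fun p : ℝ => (-p : ℝ)) Filter.atBot
          Filter.atTop := Filter.tendsto_neg_atBot_atTop
      have := (h1.comp h2).const_mul ((A*ε^3) ^ ((1:ℝ)/4))
      simpa using this
    refine tendsto_of_tendsto_of_tendsto_of_le_of_le' tendsto_const_nhds hub
      ?_ ?_
    · filter_upwards [Filter.eventually_lt_atBot (0:ℝ)] with p hp
      exact (hH p hp).1.1.le
    · filter_upwards [Filter.eventually_lt_atBot (0:ℝ)] with p hp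
      exact hHle p hp
  -- rewrite the function eventually
  have heq : ∀ᶠ p in Filter.atBot, H p * |p| ^ ((1:ℝ)/4)
      = (A*ε^3 - A*ε^2 * H p) ^ ((1:ℝ)/4) := by
    filter_upwards [Filter.eventually_lt_atBot (0:ℝ)] with p hp
    obtain ⟨⟨h0, h1⟩, _⟩ := hH p hp
    have hnp : 0 < -p := by linarith
    rw [← key p hp, Real.mul_rpow (by positivity) hnp.le]
    have hL : ((H p)^4) ^ ((1:ℝ)/4) = H p := by
      rw [← Real.rpow_natCast (H p) 4, ← Real.rpow_mul h0.le]
      norm_num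
    rw [hL, abs_of_neg hp]
  -- limit of the rewritten function
  have hlim : Filter.Tendsto (fun p => (A*ε^3 - A*ε^2 * H p) ^ ((1:ℝ)/4))
      Filter.atBot (nhds ((A*ε^3) ^ ((1:ℝ)/4))) := by
    have hf : Filter.Tendsto (fun p => A*ε^3 - A*ε^2 * H p) Filter.atBot
        (nhds (A*ε^3)) := by
      have := (hH0.const_mul (A*ε^2)).const_sub (A*ε^3)
      simpa using this
    exact hf.rpow_const (Or.inl (by positivity))
  have hval : (A*ε^3) ^ ((1:ℝ)/4) = ε ^ ((3:ℝ)/4) * A ^ ((1:ℝ)/4) := by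
    rw [Real.mul_rpow hA.le (by positivity), ← Real.rpow_natCast ε 3,
      ← Real.rpow_mul hε.le]
    norm_num
    ring
  rw [← hval]
  exact hlim.congr' (heq.mono fun _ h => h.symm)
end

section
/- Fix p > 0 and A > 0. For each sufficiently small ε > 0 (so that p < 27A/(256ε)), let H_s(ε) denote the unique solution of A·Π_ε(H) = p in the interval (ε, 4ε/3). Then (H_s(ε) − ε)/ε² → p/A as ε → 0⁺; that is, the saddle point has the expansion H_s = ε + ε²p/A + O(ε³). -/
theorem stmt_6 (A p : ℝ) (hA : 0 < A) (hp : 0 < p) (Hs : ℝ → ℝ)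
    (hHs : ∀ ε : ℝ, 0 < ε → p < 27*A/(256*ε) →
      Hs ε ∈ Set.Ioo ε (4*ε/3) ∧ A * disjoiningPressure ε (Hs ε) = p) :
    Filter.Tendsto (fun ε : ℝ => (Hs ε - ε) / ε^2)
      (nhdsWithin 0 (Set.Ioi 0)) (nhds (p/A)) := by
  set δ : ℝ := 27*A/(512*p) with hδdef
  have hδ : 0 < δ := by positivity
  have hev : ∀ᶠ ε in nhdsWithin 0 (Set.Ioi 0), ε ∈ Set.Ioo (0:ℝ) δ :=
    Ioo_mem_nhdsGT_of_mem ⟨le_refl 0, hδ⟩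
  -- For ε in (0, δ), the hypothesis applies
  have key : ∀ ε ∈ Set.Ioo (0:ℝ) δ,
      Hs ε ∈ Set.Ioo ε (4*ε/3) ∧ A * disjoiningPressure ε (Hs ε) = p := by
    intro ε ⟨hε, hεδ⟩
    refine hHs ε hε ?_
    rw [hδdef, lt_div_iff₀ (by positivity)] at hεδ
    rw [lt_div_iff₀ (by positivity)]
    nlinarith
  -- algebraic identity on the interval
  have main : ∀ ε ∈ Set.Ioo (0:ℝ) δ,
      (Hs ε - ε) / ε^2 = (p/A) * (Hs ε / ε)^4 := by
    intro ε hε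
    obtain ⟨⟨h1, h2⟩, heq⟩ := key ε hε
    have hε0 : 0 < ε := hε.1
    have hH : 0 < Hs ε := hε0.trans h1
    rw [disjoiningPressure] at heq
    field_simp at heq ⊢
    have h3 : (A*ε^2*(Hs ε - ε)) * Hs ε^3 = (p*Hs ε^4) * Hs ε^3 := by
      linear_combination Hs ε^3 * heq
    have h4 : A*ε^2*(Hs ε - ε) = p*Hs ε^4 :=
      mul_right_cancel₀ (pow_ne_zero 3 hH.ne') h3
    linear_combination h4
  -- Hs ε / ε tends to 1
  have hratio : Filter.Tendsto (fun ε : ℝ => Hs ε / ε)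
      (nhdsWithin 0 (Set.Ioi 0)) (nhds 1) := by
    have hupper : ∀ᶠ ε in nhdsWithin 0 (Set.Ioi 0),
        Hs ε / ε ≤ 1 + (p/A) * (4/3)^4 * ε := by
      filter_upwards [hev] with ε hε
      obtain ⟨⟨h1, h2⟩, _⟩ := key ε hε
      have hε0 : 0 < ε := hε.1
      have hH : 0 < Hs ε := hε0.trans h1
      have hmain := main ε hε
      have hH4 : (Hs ε / ε)^4 ≤ (4/3)^4 := by
        apply pow_le_pow_left₀ (by positivity)
        rw [div_le_iff₀ hε0]; linarith
      have : (Hs ε - ε) / ε^2 ≤ (p/A) * (4/3)^4 := by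
        rw [hmain]
        exact mul_le_mul_of_nonneg_left hH4 (by positivity)
      rw [div_le_iff₀ hε0, add_mul, one_mul]
      rw [div_le_iff₀ (by positivity : (0:ℝ) < ε^2)] at this
      nlinarith
    have hlower : ∀ᶠ ε in nhdsWithin 0 (Set.Ioi 0), 1 ≤ Hs ε / ε := by
      filter_upwards [hev] with ε hε
      obtain ⟨⟨h1, _⟩, _⟩ := key ε hε
      rw [le_div_iff₀ hε.1]; linarith
    have htu : Filter.Tendsto (fun ε : ℝ => 1 + (p/A) * (4/3)^4 * ε)
        (nhdsWithin 0 (Set.Ioi 0)) (nhds 1) := by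
      have : Filter.Tendsto (fun ε : ℝ => 1 + (p/A) * (4/3)^4 * ε)
          (nhds 0) (nhds (1 + (p/A) * (4/3)^4 * 0)) := by
        exact (continuous_const.add (continuous_const.mul continuous_id)).tendsto 0
      simpa using this.mono_left nhdsWithin_le_nhds
    exact tendsto_of_tendsto_of_tendsto_of_le_of_le' tendsto_const_nhds htu hlower hupper
  have hfin : Filter.Tendsto (fun ε : ℝ => (p/A) * (Hs ε / ε)^4)
      (nhdsWithin 0 (Set.Ioi 0)) (nhds (p/A)) := by
    have := (hratio.pow 4).const_mul (p/A)
    simpa using this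
  refine hfin.congr' ?_
  filter_upwards [hev] with ε hε
  exact (main ε hε).symm
end

section
/- Let ε > 0, A₁, A₂ > 0, p ∈ ℝ, 0 < s < L, and let h : [0, L] → (0, ∞) be continuously differentiable on [0, L], twice continuously differentiable on [0, s] and on [s, L], satisfying h''(x) = A₁·Π_ε(h(x)) − p on (0, s) and h''(x) = A₂·Π_ε(h(x)) − p on (s, L), together with h'(0) = 0 and h'(L) = 0. Then the matching condition (A₁ − A₂)·U_ε(h(s)) + p·(h(0) − h(L)) = A₁·U_ε(h(0)) − A₂·U_ε(h(L)) holds. -/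
/-- The wetting potential `U_ε(h) = −ε²/(2h²) + ε³/(3h³)`. -/
noncomputable def wettingPotential (ε h : ℝ) : ℝ := -ε^2 / (2*h^2) + ε^3 / (3*h^3)

lemma hasDerivAt_wettingPotential (ε y : ℝ) (hy : y ≠ 0) :
    HasDerivAt (wettingPotential ε) (disjoiningPressure ε y) y := by
  have hy2 : (2 * y ^ 2 : ℝ) ≠ 0 := mul_ne_zero two_ne_zero (pow_ne_zero 2 hy)
  have hy3 : (3 * y ^ 3 : ℝ) ≠ 0 := mul_ne_zero three_ne_zero (pow_ne_zero 3 hy)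
  have d2 := (hasDerivAt_pow 2 y).const_mul (2 : ℝ)
  have d3 := (hasDerivAt_pow 3 y).const_mul (3 : ℝ)
  have h1 := (hasDerivAt_const y (-ε ^ 2)).div d2 hy2
  have h2 := (hasDerivAt_const y (ε ^ 3)).div d3 hy3
  have h12 := h1.add h2
  unfold wettingPotential disjoiningPressure
  refine h12.congr_deriv ?_
  field_simp
  ring

/-- Constancy of a function with zero derivative on the interior. -/
lemma const_of_deriv_zero {a b : ℝ} (hab : a < b) {F : ℝ → ℝ}
    (hc : ContinuousOn F (Set.Icc a b))
    (hd : ∀ x ∈ Set.Ioo a b, HasDerivAt F 0 x) : F b = F a := by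
  have hint : interior (Set.Icc a b) = Set.Ioo a b := interior_Icc
  have hdiff : DifferentiableOn ℝ F (interior (Set.Icc a b)) := by
    rw [hint]
    exact fun x hx => (hd x hx).differentiableAt.differentiableWithinAt
  have hderiv : ∀ x ∈ interior (Set.Icc a b), deriv F x = 0 := by
    rw [hint]; exact fun x hx => (hd x hx).deriv
  have hmono : MonotoneOn F (Set.Icc a b) :=
    monotoneOn_of_deriv_nonneg (convex_Icc a b) hc hdiff
      (fun x hx => le_of_eq (hderiv x hx).symm)
  have hanti : AntitoneOn F (Set.Icc a b) :=
    antitoneOn_of_deriv_nonpos (convex_Icc a b) hc hdiff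
      (fun x hx => le_of_eq (hderiv x hx))
  have ha : a ∈ Set.Icc a b := Set.left_mem_Icc.2 hab.le
  have hb : b ∈ Set.Icc a b := Set.right_mem_Icc.2 hab.le
  exact le_antisymm (hanti ha hb hab.le) (hmono ha hb hab.le)

/-- Energy first integral on one piece. -/
lemma energy_const (ε A p a b : ℝ) (hab : a < b) (h h' : ℝ → ℝ)
    (hpos : ∀ x ∈ Set.Icc a b, 0 < h x)
    (hd1 : ∀ x ∈ Set.Icc a b, HasDerivWithinAt h (h' x) (Set.Icc a b) x)
    (hcont : ContinuousOn h' (Set.Icc a b))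
    (hd2 : ∀ x ∈ Set.Ioo a b,
      HasDerivAt h' (A * disjoiningPressure ε (h x) - p) x) :
    (h' b)^2/2 - A * wettingPotential ε (h b) + p * h b =
      (h' a)^2/2 - A * wettingPotential ε (h a) + p * h a := by
  set F : ℝ → ℝ := fun x => (h' x)^2/2 - A * wettingPotential ε (h x) + p * h x with hF
  have hh : ContinuousOn h (Set.Icc a b) := fun x hx => (hd1 x hx).continuousWithinAt
  have hUc : ContinuousOn (fun x => wettingPotential ε (h x)) (Set.Icc a b) := by
    unfold wettingPotential
    apply ContinuousOn.add
    · exact continuousOn_const.div (continuousOn_const.mul (hh.pow 2))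
        (fun x hx => mul_ne_zero two_ne_zero (pow_ne_zero 2 (hpos x hx).ne'))
    · exact continuousOn_const.div (continuousOn_const.mul (hh.pow 3))
        (fun x hx => mul_ne_zero three_ne_zero (pow_ne_zero 3 (hpos x hx).ne'))
  have hFc : ContinuousOn F (Set.Icc a b) :=
    (((hcont.pow 2).div_const 2).sub (continuousOn_const.mul hUc)).add (continuousOn_const.mul hh)
  have hFd : ∀ x ∈ Set.Ioo a b, HasDerivAt F 0 x := by
    intro x hx
    have hmem : Set.Icc a b ∈ nhds x := Icc_mem_nhds hx.1 hx.2
    have hhx : HasDerivAt h (h' x) x :=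
      (hd1 x (Set.Ioo_subset_Icc_self hx)).hasDerivAt hmem
    have hU : HasDerivAt (wettingPotential ε) (disjoiningPressure ε (h x)) (h x) :=
      hasDerivAt_wettingPotential ε (h x) (hpos x (Set.Ioo_subset_Icc_self hx)).ne'
    have hUx : HasDerivAt (fun x => wettingPotential ε (h x))
        (disjoiningPressure ε (h x) * h' x) x := hU.comp x hhx
    have h2 := hd2 x hx
    have hFd' := (((h2.pow 2).div_const 2).sub (hUx.const_mul A)).add (hhx.const_mul p)
    refine hFd'.congr_deriv ?_
    push_cast
    ring
  have := const_of_deriv_zero hab hFc hFd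
  simpa [hF] using this

theorem stmt_8 (ε A₁ A₂ p s L : ℝ) (hε : 0 < ε) (hA₁ : 0 < A₁) (hA₂ : 0 < A₂)
    (hs : 0 < s) (hsL : s < L)
    (h h' : ℝ → ℝ)
    (hpos : ∀ x ∈ Set.Icc 0 L, 0 < h x)
    (hd1 : ∀ x ∈ Set.Icc 0 L, HasDerivWithinAt h (h' x) (Set.Icc 0 L) x)
    (hcont : ContinuousOn h' (Set.Icc 0 L))
    (hd2a : ∀ x ∈ Set.Ioo 0 s,
      HasDerivAt h' (A₁ * disjoiningPressure ε (h x) - p) x)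
    (hd2b : ∀ x ∈ Set.Ioo s L,
      HasDerivAt h' (A₂ * disjoiningPressure ε (h x) - p) x)
    (hb0 : h' 0 = 0) (hbL : h' L = 0) :
    (A₁ - A₂) * wettingPotential ε (h s) + p * (h 0 - h L) =
      A₁ * wettingPotential ε (h 0) - A₂ * wettingPotential ε (h L) := by
  have hsub1 : Set.Icc (0:ℝ) s ⊆ Set.Icc 0 L :=
    Set.Icc_subset_Icc le_rfl hsL.le
  have hsub2 : Set.Icc s L ⊆ Set.Icc (0:ℝ) L :=
    Set.Icc_subset_Icc hs.le le_rfl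
  have e1 := energy_const ε A₁ p 0 s hs h h'
    (fun x hx => hpos x (hsub1 hx))
    (fun x hx => ((hd1 x (hsub1 hx)).mono hsub1))
    (hcont.mono hsub1) hd2a
  have e2 := energy_const ε A₂ p s L hsL h h'
    (fun x hx => hpos x (hsub2 hx))
    (fun x hx => ((hd1 x (hsub2 hx)).mono hsub2))
    (hcont.mono hsub2) hd2b
  rw [hb0] at e1
  rw [hbL] at e2
  nlinarith [e1, e2]
end

section
/- Let ε > 0, L > 0, 0 < A_min ≤ A_max, and E₀ ∈ ℝ. Then there exists a constant c > 0, depending only on ε, L, A_min, A_max, and E₀, such that for every measurable A : [0, L] → [A_min, A_max] and every continuously differentiable g : [0, L] → (0, ∞) satisfying ∫₀^L [A(x)·U_ε(g(x)) + (1/2)g'(x)²] dx ≤ E₀, one has g(x) ≥ c for all x ∈ [0, L]. -/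
open MeasureTheory Set

lemma wetting_eq (ε h : ℝ) (hh : h ≠ 0) :
    wettingPotential ε h = (2*ε^3 - 3*ε^2*h)/(6*h^3) := by
  unfold wettingPotential; field_simp; ring

lemma wetting_ge (ε h : ℝ) (hε : 0 < ε) (hh : 0 < h) :
    -(1:ℝ)/6 ≤ wettingPotential ε h := by
  rw [wetting_eq ε h hh.ne', le_div_iff₀ (by positivity)]
  nlinarith [mul_nonneg (sq_nonneg (h - ε)) (by linarith : (0:ℝ) ≤ h + 2*ε)]

lemma wetting_ge_of_small (ε h : ℝ) (hε : 0 < ε) (hh : 0 < h) (hle : h ≤ ε/2) :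
    ε^3/(12*h^3) ≤ wettingPotential ε h := by
  have h3 : 0 < h^3 := by positivity
  rw [wetting_eq ε h hh.ne', div_le_div_iff₀ (by positivity) (by positivity)]
  nlinarith [mul_nonneg (mul_nonneg (sq_nonneg ε) h3.le) (by linarith : (0:ℝ) ≤ ε - 2*h)]

lemma amgm_aux (u v : ℝ) : v * u ≤ v^2/2 + (1/2) * u^2 := by
  nlinarith [sq_nonneg (u - v)]

theorem stmt_14 (ε L Amin Amax E₀ : ℝ) (hε : 0 < ε) (hL : 0 < L)
    (hAmin : 0 < Amin) (hle : Amin ≤ Amax) :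
    ∃ c : ℝ, 0 < c ∧
      ∀ (A : ℝ → ℝ), Measurable A →
        (∀ x ∈ Set.Icc 0 L, A x ∈ Set.Icc Amin Amax) →
      ∀ (g g' : ℝ → ℝ),
        (∀ x ∈ Set.Icc 0 L, 0 < g x) →
        (∀ x ∈ Set.Icc 0 L, HasDerivWithinAt g (g' x) (Set.Icc 0 L) x) →
        ContinuousOn g' (Set.Icc 0 L) →
        (∫ x in (0:ℝ)..L, (A x * wettingPotential ε (g x) + (1/2) * (g' x)^2)) ≤ E₀ →
        ∀ x ∈ Set.Icc 0 L, c ≤ g x := by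
  have hAmax : 0 < Amax := lt_of_lt_of_le hAmin hle
  obtain ⟨K, hKdef⟩ : ∃ K : ℝ, K = max (E₀ + Amax*L/6) 1 := ⟨_, rfl⟩
  have hK1 : (1:ℝ) ≤ K := by rw [hKdef]; exact le_max_right _ _
  have hK0 : (0:ℝ) < K := lt_of_lt_of_le one_pos hK1
  have hK2 : E₀ + Amax*L/6 ≤ K := by rw [hKdef]; exact le_max_left _ _
  have hKne : K ≠ 0 := ne_of_gt hK0
  obtain ⟨τ, hτdef⟩ : ∃ τ : ℝ, τ = min (min (ε/4) (Real.sqrt L)) (Amin*ε^3/(200*K^2)) := ⟨_, rfl⟩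
  have hτ0 : 0 < τ := by
    rw [hτdef]
    exact lt_min (lt_min (by positivity) (Real.sqrt_pos.2 hL)) (by positivity)
  have hτne : τ ≠ 0 := ne_of_gt hτ0
  refine ⟨τ, hτ0, ?_⟩
  intro A hAmeas hAmem g g' hgpos hgderiv hg'cont hE x₀ hx₀
  by_contra hcon
  push_neg at hcon
  have hτε : τ ≤ ε/4 := by rw [hτdef]; exact le_trans (min_le_left _ _) (min_le_left _ _)
  have hτL : τ^2 ≤ L := by
    have h1 : τ ≤ Real.sqrt L := by
      rw [hτdef]; exact le_trans (min_le_left _ _) (min_le_right _ _)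
    calc τ^2 ≤ (Real.sqrt L)^2 := pow_le_pow_left₀ hτ0.le h1 2
    _ = L := Real.sq_sqrt hL.le
  have hτK : τ ≤ Amin*ε^3/(200*K^2) := by rw [hτdef]; exact min_le_right _ _
  obtain ⟨l, hldef⟩ : ∃ l : ℝ, l = 2*K/τ := ⟨_, rfl⟩
  have hl0 : 0 < l := by rw [hldef]; exact div_pos (by linarith) hτ0
  obtain ⟨δ, hδdef⟩ : ∃ δ : ℝ, δ = τ^2/(2*K) := ⟨_, rfl⟩
  have hδ0 : 0 < δ := by rw [hδdef]; exact div_pos (pow_pos hτ0 2) (by linarith)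
  have hδL : δ ≤ L := by
    rw [hδdef, div_le_iff₀ (by linarith)]
    nlinarith [mul_nonneg hL.le (by linarith : (0:ℝ) ≤ 2*K - 1)]
  obtain ⟨a, hadef⟩ : ∃ a : ℝ, a = min x₀ (L - δ) := ⟨_, rfl⟩
  obtain ⟨b, hbdef⟩ : ∃ b : ℝ, b = min x₀ (L - δ) + δ := ⟨_, rfl⟩
  rw [← hadef] at hbdef
  obtain ⟨hx₀0, hx₀L⟩ := hx₀
  have ha0 : 0 ≤ a := by rw [hadef]; exact le_min hx₀0 (by linarith)
  have hab : a ≤ b := by rw [hbdef]; linarith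
  have hbL : b ≤ L := by
    have h1 : a ≤ L - δ := by rw [hadef]; exact min_le_right _ _
    rw [hbdef]; linarith
  have hax : a ≤ x₀ := by rw [hadef]; exact min_le_left _ _
  have hxb : x₀ ≤ b := by
    rw [hbdef, hadef]
    rcases le_total x₀ (L - δ) with h | h
    · rw [min_eq_left h]; linarith
    · rw [min_eq_right h]; linarith
  -- continuity facts
  have hgcont : ContinuousOn g (Set.Icc 0 L) := fun x hx => (hgderiv x hx).continuousWithinAt
  have hUcont : ContinuousOn (fun x => wettingPotential ε (g x)) (Set.Icc 0 L) := by
    unfold wettingPotential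
    apply ContinuousOn.add
    · exact ContinuousOn.div continuousOn_const (continuousOn_const.mul (hgcont.pow 2))
        (fun x hx => by have := hgpos x hx; positivity)
    · exact ContinuousOn.div continuousOn_const (continuousOn_const.mul (hgcont.pow 3))
        (fun x hx => by have := hgpos x hx; positivity)
  obtain ⟨B, hB⟩ := isCompact_Icc.exists_bound_of_continuousOn hUcont
  have hsub : ∀ {c d : ℝ}, 0 ≤ c → c ≤ d → d ≤ L → Set.uIcc c d ⊆ Set.Icc 0 L := by
    intro c d hc hcd hd
    rw [Set.uIcc_of_le hcd]
    exact Set.Icc_subset_Icc hc hd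
  -- integrability of the full integrand F
  obtain ⟨F, hFdef⟩ : ∃ F : ℝ → ℝ,
      F = fun x => A x * wettingPotential ε (g x) + (1/2) * (g' x)^2 := ⟨_, rfl⟩
  replace hE : (∫ x in (0:ℝ)..L, F x) ≤ E₀ := by rw [hFdef]; exact hE
  have hFint : IntegrableOn F (Set.Icc 0 L) := by
    rw [hFdef]
    apply MeasureTheory.Integrable.add
    · apply MeasureTheory.Integrable.mono' (g := fun _ => Amax * B)
        (integrableOn_const measure_Icc_lt_top.ne enorm_ne_top)
      · exact (hAmeas.aestronglyMeasurable).mul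
          (hUcont.aestronglyMeasurable measurableSet_Icc)
      · filter_upwards [ae_restrict_mem measurableSet_Icc] with x hx
        have hA := hAmem x hx
        have hUb := hB x hx
        rw [Real.norm_eq_abs, abs_mul]
        apply mul_le_mul _ hUb (abs_nonneg _) hAmax.le
        rw [abs_of_pos (lt_of_lt_of_le hAmin hA.1)]
        exact hA.2
    · exact (continuousOn_const.mul (hg'cont.pow 2)).integrableOn_compact isCompact_Icc
  have hFii : ∀ c d : ℝ, 0 ≤ c → c ≤ d → d ≤ L → IntervalIntegrable F volume c d :=
    fun c d hc hcd hd => (hFint.mono_set (hsub hc hcd hd)).intervalIntegrable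
  have hg2ii : ∀ c d : ℝ, 0 ≤ c → c ≤ d → d ≤ L →
      IntervalIntegrable (fun x => (1/2) * (g' x)^2) volume c d :=
    fun c d hc hcd hd => ((continuousOn_const.mul (hg'cont.pow 2)).mono
      (hsub hc hcd hd)).intervalIntegrable
  -- pointwise lower bound everywhere
  have hAUlow : ∀ x ∈ Set.Icc (0:ℝ) L, -(Amax/6) ≤ A x * wettingPotential ε (g x) := by
    intro x hx
    have hA := hAmem x hx
    have hU := wetting_ge ε (g x) hε (hgpos x hx)
    have hAx : 0 ≤ A x := le_trans hAmin.le hA.1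
    have h1 : 0 ≤ A x * (wettingPotential ε (g x) + 1/6) :=
      mul_nonneg hAx (by linarith)
    nlinarith [hA.2]
  have hlowAll : ∀ x ∈ Set.Icc (0:ℝ) L, -(Amax/6) ≤ F x := by
    intro x hx
    simp only [hFdef]
    linarith [sq_nonneg (g' x), hAUlow x hx]
  -- Step A : kinetic energy bound
  have hKbound : (∫ x in (0:ℝ)..L, (1/2) * (g' x)^2) ≤ K := by
    have hmono : (∫ x in (0:ℝ)..L, ((1/2) * (g' x)^2 - Amax/6))
        ≤ ∫ x in (0:ℝ)..L, F x := by
      apply intervalIntegral.integral_mono_on hL.le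
        ((hg2ii 0 L le_rfl hL.le le_rfl).sub intervalIntegrable_const)
        (hFii 0 L le_rfl hL.le le_rfl)
      intro x hx
      have := hAUlow x hx
      simp only [hFdef]
      linarith
    have heq : (∫ x in (0:ℝ)..L, ((1/2) * (g' x)^2 - Amax/6))
        = (∫ x in (0:ℝ)..L, (1/2) * (g' x)^2) - L * (Amax/6) := by
      rw [intervalIntegral.integral_sub (hg2ii 0 L le_rfl hL.le le_rfl)
        intervalIntegrable_const, intervalIntegral.integral_const]
      simp [smul_eq_mul]
    rw [heq] at hmono
    linarith [hE]
  have hg'le : ∀ c d : ℝ, 0 ≤ c → c ≤ d → d ≤ L →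
      (∫ x in c..d, (1/2) * (g' x)^2) ≤ K := by
    intro c d hc hcd hd
    refine le_trans (intervalIntegral.integral_mono_interval hc hcd hd
      (Filter.Eventually.of_forall (fun x => by positivity))
      (hg2ii 0 L le_rfl hL.le le_rfl)) hKbound
  -- Step B : oscillation bound
  have key : ∀ c d : ℝ, 0 ≤ c → c ≤ d → d ≤ L → d - c ≤ δ →
      g d - g c ≤ τ ∧ g c - g d ≤ τ := by
    intro c d hc hcd hdL hlen
    have hcontcd : ContinuousOn g (Set.Icc c d) := hgcont.mono (Set.Icc_subset_Icc hc hdL)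
    have hderivcd : ∀ x ∈ Set.Ioo c d, HasDerivWithinAt g (g' x) (Set.Ioi x) x := by
      intro x hx
      have hxI : x ∈ Set.Icc (0:ℝ) L := ⟨le_trans hc hx.1.le, le_trans hx.2.le hdL⟩
      exact ((hgderiv x hxI).hasDerivAt (Icc_mem_nhds (lt_of_le_of_lt hc hx.1)
        (lt_of_lt_of_le hx.2 hdL))).hasDerivWithinAt
    have hg'ii : IntervalIntegrable g' volume c d :=
      (hg'cont.mono (hsub hc hcd hdL)).intervalIntegrable
    have hftc : (∫ x in c..d, g' x) = g d - g c :=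
      intervalIntegral.integral_eq_sub_of_hasDeriv_right_of_le hcd hcontcd hderivcd hg'ii
    have hrhsii : IntervalIntegrable (fun x => l^2/2 + (1/2) * (g' x)^2) volume c d :=
      (intervalIntegrable_const.add (hg2ii c d hc hcd hdL))
    have hrhs_eq : (∫ x in c..d, (l^2/2 + (1/2) * (g' x)^2))
        = (d - c) * (l^2/2) + ∫ x in c..d, (1/2) * (g' x)^2 := by
      rw [intervalIntegral.integral_add intervalIntegrable_const (hg2ii c d hc hcd hdL),
        intervalIntegral.integral_const]
      simp [smul_eq_mul]
    have hrhs_le : (∫ x in c..d, (l^2/2 + (1/2) * (g' x)^2)) ≤ δ * (l^2/2) + K := by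
      rw [hrhs_eq]
      have := hg'le c d hc hcd hdL
      have h2 : (d - c) * (l^2/2) ≤ δ * (l^2/2) :=
        mul_le_mul_of_nonneg_right hlen (by positivity)
      linarith
    have hlτ : δ * (l^2/2) + K = l * τ := by
      rw [hldef, hδdef]
      field_simp
      ring
    constructor
    · have h1 : (∫ x in c..d, l * g' x) ≤ ∫ x in c..d, (l^2/2 + (1/2) * (g' x)^2) := by
        apply intervalIntegral.integral_mono_on hcd
          ((continuousOn_const.mul (hg'cont.mono (hsub hc hcd hdL))).intervalIntegrable)
          hrhsii
        intro x hx
        exact amgm_aux (g' x) l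
      rw [intervalIntegral.integral_const_mul, hftc] at h1
      have := le_trans h1 hrhs_le
      rw [hlτ] at this
      exact (mul_le_mul_iff_right₀ hl0).1 this
    · have h1 : (∫ x in c..d, l * -g' x) ≤ ∫ x in c..d, (l^2/2 + (1/2) * (g' x)^2) := by
        apply intervalIntegral.integral_mono_on hcd
          ((continuousOn_const.mul (hg'cont.mono (hsub hc hcd hdL)).neg).intervalIntegrable)
          hrhsii
        intro x hx
        have := amgm_aux (-(g' x)) l
        simpa [neg_sq] using this
      have heq2 : (∫ x in c..d, l * -g' x) = l * (g c - g d) := by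
        have : (fun x => l * -g' x) = fun x => (-l) * g' x := by funext x; ring
        rw [this, intervalIntegral.integral_const_mul, hftc]
        ring
      rw [heq2] at h1
      have := le_trans h1 hrhs_le
      rw [hlτ] at this
      exact (mul_le_mul_iff_right₀ hl0).1 this
  have hsmall : ∀ x ∈ Set.Icc a b, g x < 2 * τ := by
    intro t ht
    have h1 : g t - g x₀ ≤ τ := by
      rcases le_total x₀ t with h | h
      · exact (key x₀ t hx₀0 h (le_trans ht.2 hbL) (by linarith [ht.2, hax])).1
      · exact (key t x₀ (le_trans ha0 ht.1) h hx₀L (by linarith [ht.1, hxb])).2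
    linarith
  -- Step C : energy lower bound on [a,b]
  have hlowI : ∀ x ∈ Set.Icc a b, Amin * ε^3 / (96 * τ^3) ≤ F x := by
    intro x hx
    have hxI : x ∈ Set.Icc (0:ℝ) L := ⟨le_trans ha0 hx.1, le_trans hx.2 hbL⟩
    have hgx := hgpos x hxI
    have hg2τ : g x ≤ 2 * τ := (hsmall x hx).le
    have hgε : g x ≤ ε / 2 := by linarith
    have hU := wetting_ge_of_small ε (g x) hε hgx hgε
    have hA := hAmem x hxI
    have hUpos : 0 < ε^3 / (12 * (g x)^3) := by positivity
    have hcube : 12 * (g x)^3 ≤ 12 * (2*τ)^3 := by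
      linarith [pow_le_pow_left₀ hgx.le hg2τ 3]
    have hd1 : ε^3 / (12 * (2*τ)^3) ≤ ε^3 / (12 * (g x)^3) :=
      div_le_div_of_nonneg_left (by positivity) (by positivity) hcube
    have hchain : Amin * ε^3 / (96 * τ^3) ≤ A x * wettingPotential ε (g x) := by
      calc Amin * ε^3 / (96 * τ^3) = Amin * (ε^3 / (12 * (2*τ)^3)) := by
            field_simp; ring
      _ ≤ Amin * (ε^3 / (12 * (g x)^3)) := mul_le_mul_of_nonneg_left hd1 hAmin.le
      _ ≤ Amin * wettingPotential ε (g x) := mul_le_mul_of_nonneg_left hU hAmin.le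
      _ ≤ A x * wettingPotential ε (g x) :=
            mul_le_mul_of_nonneg_right hA.1 (le_trans hUpos.le hU)
    simp only [hFdef]
    linarith [sq_nonneg (g' x), hchain]
  -- split the integral
  have hsplit : (∫ x in (0:ℝ)..L, F x)
      = (∫ x in (0:ℝ)..a, F x) + (∫ x in a..b, F x) + (∫ x in b..L, F x) := by
    rw [intervalIntegral.integral_add_adjacent_intervals (hFii 0 a le_rfl ha0 (le_trans hab hbL))
      (hFii a b ha0 hab hbL),
      intervalIntegral.integral_add_adjacent_intervals
      (hFii 0 b le_rfl (le_trans ha0 hab) hbL) (hFii b L (le_trans ha0 hab) hbL le_rfl)]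
  have h01 : a * (-(Amax/6)) ≤ ∫ x in (0:ℝ)..a, F x := by
    have := intervalIntegral.integral_mono_on ha0 intervalIntegrable_const
      (hFii 0 a le_rfl ha0 (le_trans hab hbL))
      (fun x hx => hlowAll x ⟨hx.1, le_trans hx.2 (le_trans hab hbL)⟩)
    rwa [intervalIntegral.integral_const, smul_eq_mul, sub_zero] at this
  have h23 : (L - b) * (-(Amax/6)) ≤ ∫ x in b..L, F x := by
    have := intervalIntegral.integral_mono_on hbL intervalIntegrable_const
      (hFii b L (le_trans ha0 hab) hbL le_rfl)
      (fun x hx => hlowAll x ⟨le_trans (le_trans ha0 hab) hx.1, hx.2⟩)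
    rwa [intervalIntegral.integral_const, smul_eq_mul] at this
  have h12 : δ * (Amin * ε^3 / (96 * τ^3)) ≤ ∫ x in a..b, F x := by
    have := intervalIntegral.integral_mono_on hab intervalIntegrable_const
      (hFii a b ha0 hab hbL) hlowI
    rw [intervalIntegral.integral_const, smul_eq_mul] at this
    have hba : b - a = δ := by rw [hbdef]; ring
    rwa [hba] at this
  have hfin : δ * (Amin * ε^3 / (96 * τ^3)) ≤ K := by
    have hsum : a * (-(Amax/6)) + δ * (Amin * ε^3 / (96 * τ^3)) + (L - b) * (-(Amax/6)) ≤ E₀ := by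
      rw [hsplit] at hE
      linarith
    linarith [hsum, hK2, mul_nonneg (by linarith : (0:ℝ) ≤ b - a) hAmax.le]
  -- final numeric contradiction
  have h1 : Amin * ε^3 ≤ 192 * K^2 * τ := by
    rw [hδdef, div_mul_div_comm, div_le_iff₀ (by positivity)] at hfin
    have h2 : τ^2 * (Amin * ε^3) ≤ τ^2 * (192 * K^2 * τ) := by linarith [hfin]
    exact le_of_mul_le_mul_left h2 (pow_pos hτ0 2)
  have h2 : τ * (200 * K^2) ≤ Amin * ε^3 := by
    rw [← le_div_iff₀ (by positivity)]
    exact hτK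
  linarith [h1, h2, mul_pos (mul_pos hK0 hK0) hτ0]
end

section
/- Let ε > 0, L > 0, 0 < A_min ≤ A_max, and E₀ ∈ ℝ. Then there exists c > 0, depending only on ε, L, A_min, A_max, and E₀ (and in particular independent of T), such that the following holds: for every T > 0, every measurable A : [0, L] → [A_min, A_max], and every function h : [0, L] × [0, T] → (0, ∞) such that h(·, t) is continuously differentiable in x for each t ∈ [0, T] and the energy E(t) = ∫₀^L [A(x)·U_ε(h(x,t)) + (1/2)(∂h/∂x)²(x,t)] dx satisfies E(t) ≤ E₀ for all t ∈ [0, T], one has h(x, t) ≥ c for all (x, t) ∈ [0, L] × [0, T]. Consequently, solutions of the thin-film equation with positive initial data of finite energy remain uniformly positive for all time. -/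
lemma wp_ge_min (ε y : ℝ) (hε : 0 < ε) (hy : 0 < y) : -(1/6) ≤ wettingPotential ε y := by
  have h2 : wettingPotential ε y + 1/6 = (y - ε)^2 * (y + 2*ε) / (6 * y^3) := by
    unfold wettingPotential; field_simp; ring
  nlinarith [div_nonneg (mul_nonneg (sq_nonneg (y - ε)) (by linarith : (0:ℝ) ≤ y + 2*ε))
    (by positivity : (0:ℝ) ≤ 6 * y^3), h2]

lemma wp_anti (ε a b : ℝ) (hε : 0 < ε) (ha : 0 < a) (hab : a ≤ b) (hb : b ≤ ε) :
    wettingPotential ε b ≤ wettingPotential ε a := by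
  have hb0 : 0 < b := lt_of_lt_of_le ha hab
  have ha' : a ≠ 0 := ne_of_gt ha
  have hb' : b ≠ 0 := ne_of_gt hb0
  have key : wettingPotential ε a - wettingPotential ε b
      = ε^2 * (b - a) * (2*ε*(a^2 + a*b + b^2) - 3*a*b*(a+b)) / (6 * a^3 * b^3) := by
    unfold wettingPotential; field_simp; ring
  have hnum : 0 ≤ 2*ε*(a^2 + a*b + b^2) - 3*a*b*(a+b) := by
    nlinarith [sq_nonneg (a - b), mul_pos ha hb0]
  nlinarith [div_nonneg (mul_nonneg (mul_nonneg (sq_nonneg ε) (by linarith : (0:ℝ) ≤ b - a)) hnum)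
    (by positivity : (0:ℝ) ≤ 6 * a^3 * b^3), key]

lemma wp_lb (ε a b : ℝ) (hε : 0 < ε) (ha : 0 < a) (hab : a ≤ b) (hb : b ≤ ε/3) :
    ε^3 / (6 * b^3) ≤ wettingPotential ε a := by
  have hb0 : 0 < b := lt_of_lt_of_le ha hab
  have hb' : b ≠ 0 := ne_of_gt hb0
  have h1 : wettingPotential ε b - ε^3/(6*b^3) = ε^2 * (ε - 3*b) / (6*b^3) := by
    unfold wettingPotential; field_simp; ring
  have h2 : 0 ≤ ε^2 * (ε - 3*b) / (6*b^3) := by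
    apply div_nonneg (mul_nonneg (sq_nonneg ε) (by linarith)) (by positivity)
  have := wp_anti ε a b hε ha hab (by linarith)
  linarith

set_option maxHeartbeats 2000000 in
theorem stmt_15 (ε L Amin Amax E₀ : ℝ) (hε : 0 < ε) (hL : 0 < L)
    (hAmin : 0 < Amin) (hle : Amin ≤ Amax) :
    ∃ c : ℝ, 0 < c ∧
      ∀ (T : ℝ), 0 < T →
      ∀ (A : ℝ → ℝ), Measurable A →
        (∀ x ∈ Set.Icc 0 L, A x ∈ Set.Icc Amin Amax) →
      ∀ (h hx : ℝ → ℝ → ℝ),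
        (∀ t ∈ Set.Icc 0 T, ∀ x ∈ Set.Icc 0 L, 0 < h x t) →
        (∀ t ∈ Set.Icc 0 T, ∀ x ∈ Set.Icc 0 L,
          HasDerivWithinAt (fun ξ => h ξ t) (hx x t) (Set.Icc 0 L) x) →
        (∀ t ∈ Set.Icc 0 T, ContinuousOn (fun ξ => hx ξ t) (Set.Icc 0 L)) →
        (∀ t ∈ Set.Icc 0 T,
          (∫ x in (0:ℝ)..L,
            (A x * wettingPotential ε (h x t) + (1/2) * (hx x t)^2)) ≤ E₀) →
        ∀ x ∈ Set.Icc 0 L, ∀ t ∈ Set.Icc 0 T, c ≤ h x t := by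
  have hAmax : 0 < Amax := lt_of_lt_of_le hAmin hle
  obtain ⟨E₁, hE₁def⟩ : ∃ x : ℝ, x = max E₀ 0 := ⟨_, rfl⟩
  have hE₁0 : 0 ≤ E₁ := hE₁def ▸ le_max_right _ _
  obtain ⟨M, hMdef⟩ : ∃ x : ℝ, x = E₁ + L * Amax / 6 + 1 := ⟨_, rfl⟩
  have hM1 : 1 ≤ M := by rw [hMdef]; nlinarith [hE₁0, mul_pos hL hAmax]
  have hM : 0 < M := lt_of_lt_of_le one_pos hM1
  obtain ⟨c₁, hc₁def⟩ : ∃ x : ℝ, x = Amin * ε^3 / (97 * M^2) := ⟨_, rfl⟩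
  have hc₁pos : 0 < c₁ := by rw [hc₁def]; positivity
  obtain ⟨c₂, hc₂def⟩ : ∃ x : ℝ, x = (L * Amin * ε^3 / (97 * M)) ^ ((1:ℝ)/3) := ⟨_, rfl⟩
  have hc₂pos : 0 < c₂ := hc₂def ▸ Real.rpow_pos_of_pos (by positivity) _
  have hc₂cube : c₂ ^ (3:ℕ) = L * Amin * ε^3 / (97 * M) := by
    rw [hc₂def, ← Real.rpow_natCast _ 3, ← Real.rpow_mul (by positivity)]
    norm_num
  obtain ⟨c, hcdef⟩ : ∃ x : ℝ, x = min (ε/6) (min c₁ c₂) := ⟨_, rfl⟩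
  have hc : 0 < c := by
    rw [hcdef]; exact lt_min (by positivity) (lt_min hc₁pos hc₂pos)
  have hcε : c ≤ ε/6 := hcdef ▸ min_le_left _ _
  have hcc₁ : c ≤ c₁ := hcdef ▸ le_trans (min_le_right _ _) (min_le_left _ _)
  have hcc₂ : c ≤ c₂ := hcdef ▸ le_trans (min_le_right _ _) (min_le_right _ _)
  refine ⟨c, hc, ?_⟩
  intro T hT A hA hArange h hx hpos hderiv hcont henergy x₀ hx₀ t ht
  by_contra hcon
  push_neg at hcon
  -- fixed time slice
  have hHpos : ∀ ξ ∈ Set.Icc (0:ℝ) L, 0 < h ξ t := hpos t ht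
  have hHd : ∀ ξ ∈ Set.Icc (0:ℝ) L, HasDerivWithinAt (fun ξ => h ξ t) (hx ξ t) (Set.Icc 0 L) ξ :=
    hderiv t ht
  have hGc : ContinuousOn (fun ξ => hx ξ t) (Set.Icc 0 L) := hcont t ht
  have hE : (∫ x in (0:ℝ)..L,
      (A x * wettingPotential ε (h x t) + (1/2) * (hx x t)^2)) ≤ E₀ := henergy t ht
  have hHc : ContinuousOn (fun ξ => h ξ t) (Set.Icc 0 L) :=
    fun ξ hξ => (hHd ξ hξ).continuousWithinAt
  have hWc : ContinuousOn (fun ξ => wettingPotential ε (h ξ t)) (Set.Icc 0 L) := by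
    simp only [wettingPotential]
    apply ContinuousOn.add
    · exact ContinuousOn.div continuousOn_const (continuousOn_const.mul (hHc.pow 2))
        (fun ξ hξ => by have := hHpos ξ hξ; positivity)
    · exact ContinuousOn.div continuousOn_const (continuousOn_const.mul (hHc.pow 3))
        (fun ξ hξ => by have := hHpos ξ hξ; positivity)
  -- integrability
  obtain ⟨C, hC⟩ := isCompact_Icc.exists_bound_of_continuousOn hWc
  have hC0 : 0 ≤ C := le_trans (norm_nonneg _) (hC 0 ⟨le_refl _, hL.le⟩)
  have hAW_int : MeasureTheory.IntegrableOn (fun ξ => A ξ * wettingPotential ε (h ξ t))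
      (Set.Icc 0 L) MeasureTheory.volume := by
    have hmeas : MeasureTheory.AEStronglyMeasurable
        (fun ξ => A ξ * wettingPotential ε (h ξ t))
        (MeasureTheory.volume.restrict (Set.Icc 0 L)) :=
      (hA.aemeasurable.mul (hWc.aemeasurable measurableSet_Icc)).aestronglyMeasurable
    apply MeasureTheory.Integrable.mono'
      (MeasureTheory.integrable_const (Amax * C)) hmeas
    filter_upwards [MeasureTheory.ae_restrict_mem measurableSet_Icc] with ξ hξ
    have h1 := hArange ξ hξ
    have h2 := hC ξ hξ
    have h3 : |A ξ| ≤ Amax := by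
      rw [abs_of_pos (lt_of_lt_of_le hAmin h1.1)]; exact h1.2
    calc ‖A ξ * wettingPotential ε (h ξ t)‖
        = |A ξ| * ‖wettingPotential ε (h ξ t)‖ := by
          rw [Real.norm_eq_abs, abs_mul, Real.norm_eq_abs]
      _ ≤ Amax * C := mul_le_mul h3 h2 (norm_nonneg _) hAmax.le
  have hG2_int : MeasureTheory.IntegrableOn (fun ξ => (1/2) * (hx ξ t)^2)
      (Set.Icc 0 L) MeasureTheory.volume :=
    (continuousOn_const.mul (hGc.pow 2)).integrableOn_Icc
  have hsq_int : MeasureTheory.IntegrableOn (fun ξ => (hx ξ t)^2)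
      (Set.Icc 0 L) MeasureTheory.volume := (hGc.pow 2).integrableOn_Icc
  have habs_int : MeasureTheory.IntegrableOn (fun ξ => |hx ξ t|)
      (Set.Icc 0 L) MeasureTheory.volume := hGc.abs.integrableOn_Icc
  have hG_int : MeasureTheory.IntegrableOn (fun ξ => hx ξ t)
      (Set.Icc 0 L) MeasureTheory.volume := hGc.integrableOn_Icc
  have hf_int : MeasureTheory.IntegrableOn
      (fun ξ => A ξ * wettingPotential ε (h ξ t) + (1/2) * (hx ξ t)^2)
      (Set.Icc 0 L) MeasureTheory.volume := hAW_int.add hG2_int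
  have hII : ∀ p q : ℝ, 0 ≤ p → p ≤ q → q ≤ L → ∀ (g : ℝ → ℝ),
      MeasureTheory.IntegrableOn g (Set.Icc 0 L) MeasureTheory.volume →
      IntervalIntegrable g MeasureTheory.volume p q := by
    intro p q h0 hpq hqL g hg
    apply MeasureTheory.IntegrableOn.intervalIntegrable
    rw [Set.uIcc_of_le hpq]
    exact hg.mono_set (Set.Icc_subset_Icc h0 hqL)
  -- pointwise lower bound for the energy density
  have hflb : ∀ ξ ∈ Set.Icc (0:ℝ) L,
      -(Amax/6) ≤ A ξ * wettingPotential ε (h ξ t) + (1/2) * (hx ξ t)^2 := by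
    intro ξ hξ
    have h1 := hArange ξ hξ
    have h2 := wp_ge_min ε (h ξ t) hε (hHpos ξ hξ)
    have h3 : A ξ * (-(1/6)) ≤ A ξ * wettingPotential ε (h ξ t) :=
      mul_le_mul_of_nonneg_left h2 (le_trans hAmin.le h1.1)
    linarith [sq_nonneg (hx ξ t), h1.2, h1.1]
  have hIntLb : ∀ p q : ℝ, 0 ≤ p → p ≤ q → q ≤ L →
      -(Amax/6) * (q - p) ≤ ∫ ξ in p..q,
        (A ξ * wettingPotential ε (h ξ t) + (1/2) * (hx ξ t)^2) := by
    intro p q h0 hpq hqL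
    have := intervalIntegral.integral_mono_on hpq intervalIntegrable_const
      (hII p q h0 hpq hqL _ hf_int)
      (fun ξ hξ => hflb ξ (Set.Icc_subset_Icc h0 hqL hξ))
    rw [intervalIntegral.integral_const, smul_eq_mul] at this
    nlinarith [this]
  -- gradient L² bound
  have hAWlb : -(Amax/6) * L ≤ ∫ ξ in (0:ℝ)..L, A ξ * wettingPotential ε (h ξ t) := by
    have hptAW : ∀ ξ ∈ Set.Icc (0:ℝ) L, -(Amax/6) ≤ A ξ * wettingPotential ε (h ξ t) := by
      intro ξ hξ
      have h1 := hArange ξ hξ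
      have h2 := wp_ge_min ε (h ξ t) hε (hHpos ξ hξ)
      have h3 : A ξ * (-(1/6)) ≤ A ξ * wettingPotential ε (h ξ t) :=
        mul_le_mul_of_nonneg_left h2 (le_trans hAmin.le h1.1)
      linarith [h1.2, h1.1, h3]
    have := intervalIntegral.integral_mono_on hL.le intervalIntegrable_const
      (hII 0 L le_rfl hL.le le_rfl _ hAW_int) hptAW
    rw [intervalIntegral.integral_const, smul_eq_mul] at this
    nlinarith [this]
  have hadd : (∫ x in (0:ℝ)..L,
      (A x * wettingPotential ε (h x t) + (1/2) * (hx x t)^2))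
      = (∫ ξ in (0:ℝ)..L, A ξ * wettingPotential ε (h ξ t))
        + ∫ ξ in (0:ℝ)..L, (1/2) * (hx ξ t)^2 :=
    intervalIntegral.integral_add (hII 0 L le_rfl hL.le le_rfl _ hAW_int)
      (hII 0 L le_rfl hL.le le_rfl _ hG2_int)
  have hG2half : (∫ ξ in (0:ℝ)..L, (1/2) * (hx ξ t)^2)
      = (1/2) * ∫ ξ in (0:ℝ)..L, (hx ξ t)^2 :=
    intervalIntegral.integral_const_mul _ _
  have hE₀E₁ : E₀ ≤ E₁ := by rw [hE₁def]; exact le_max_left _ _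
  have hG2L : (∫ ξ in (0:ℝ)..L, (hx ξ t)^2) ≤ 2*M := by
    rw [hG2half] at hadd
    linarith [hE, hAWlb, hadd, hE₀E₁, hMdef.le, hMdef.ge, hE₁0]
  -- choose the interval
  obtain ⟨δ, hδdef⟩ : ∃ x : ℝ, x = min (L/2) (c^2/(2*M)) := ⟨_, rfl⟩
  have hδpos : 0 < δ := by
    rw [hδdef]
    exact lt_min (by positivity) (div_pos (pow_pos hc 2) (by linarith))
  have hδL : δ ≤ L/2 := hδdef ▸ min_le_left _ _
  have hδc : δ ≤ c^2/(2*M) := hδdef ▸ min_le_right _ _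
  obtain ⟨a, ha0, haL, hmem⟩ : ∃ a, 0 ≤ a ∧ a + δ ≤ L ∧ x₀ ∈ Set.Icc a (a + δ) := by
    rcases le_or_gt x₀ (L/2) with hcase | hcase
    · exact ⟨x₀, hx₀.1, by linarith, le_refl _, by linarith⟩
    · exact ⟨x₀ - δ, by linarith, by linarith [hx₀.2], by linarith, by linarith⟩
  have haδ : a ≤ a + δ := by linarith
  -- interval Icc a (a+δ) inside Icc 0 L
  have hsub : Set.Icc a (a+δ) ⊆ Set.Icc 0 L := Set.Icc_subset_Icc ha0 haL
  -- ∫ G² over the small interval is ≤ 2M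
  have hsplit2 : (∫ ξ in (0:ℝ)..L, (hx ξ t)^2)
      = (∫ ξ in (0:ℝ)..a, (hx ξ t)^2) + (∫ ξ in a..(a+δ), (hx ξ t)^2)
        + ∫ ξ in (a+δ)..L, (hx ξ t)^2 := by
    rw [intervalIntegral.integral_add_adjacent_intervals
        (hII 0 a le_rfl ha0 (by linarith) _ hsq_int)
        (hII a (a+δ) ha0 haδ haL _ hsq_int),
      intervalIntegral.integral_add_adjacent_intervals
        (hII 0 (a+δ) le_rfl (by linarith) haL _ hsq_int)
        (hII (a+δ) L (by linarith) haL le_rfl _ hsq_int)]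
  have hG2I : (∫ ξ in a..(a+δ), (hx ξ t)^2) ≤ 2*M := by
    have h1 : 0 ≤ ∫ ξ in (0:ℝ)..a, (hx ξ t)^2 :=
      intervalIntegral.integral_nonneg ha0 (fun u _ => sq_nonneg _)
    have h2 : 0 ≤ ∫ ξ in (a+δ)..L, (hx ξ t)^2 :=
      intervalIntegral.integral_nonneg haL (fun u _ => sq_nonneg _)
    linarith [hsplit2, hG2L]
  -- bound on total variation B over the small interval
  obtain ⟨B, hBdef⟩ : ∃ x : ℝ, x = ∫ ξ in a..(a+δ), |hx ξ t| := ⟨_, rfl⟩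
  obtain ⟨lam, hlamdef⟩ : ∃ x : ℝ, x = 2*M/c := ⟨_, rfl⟩
  have hlam : 0 < lam := by rw [hlamdef]; positivity
  have hBle : B ≤ c := by
    have hpt : ∀ ξ ∈ Set.Icc a (a+δ), |hx ξ t| ≤ (hx ξ t)^2/(2*lam) + lam/2 := by
      intro ξ _
      have h1 : 2*lam*|hx ξ t| ≤ (hx ξ t)^2 + lam^2 := by
        nlinarith [sq_nonneg (|hx ξ t| - lam), sq_abs (hx ξ t)]
      rw [div_add_div _ _ (by positivity) (by norm_num : (2:ℝ) ≠ 0)]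
      rw [le_div_iff₀ (by positivity)]
      nlinarith [h1]
    have hint2 : IntervalIntegrable (fun ξ => (hx ξ t)^2/(2*lam) + lam/2)
        MeasureTheory.volume a (a+δ) := by
      apply IntervalIntegrable.add
      · exact (hII a (a+δ) ha0 haδ haL _ hsq_int).div_const _
      · exact intervalIntegrable_const
    have hmono := intervalIntegral.integral_mono_on haδ
      (hII a (a+δ) ha0 haδ haL _ habs_int) hint2 hpt
    have hcalc : (∫ ξ in a..(a+δ), ((hx ξ t)^2/(2*lam) + lam/2))
        = (∫ ξ in a..(a+δ), (hx ξ t)^2)/(2*lam) + lam/2*δ := by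
      rw [intervalIntegral.integral_add
          ((hII a (a+δ) ha0 haδ haL _ hsq_int).div_const _) intervalIntegrable_const,
        intervalIntegral.integral_div, intervalIntegral.integral_const]
      simp only [smul_eq_mul]
      ring
    have h1 : (∫ ξ in a..(a+δ), (hx ξ t)^2)/(2*lam) ≤ (2*M)/(2*lam) := by gcongr
    have h2 : (2*M)/(2*lam) = c/2 := by
      rw [hlamdef]; field_simp; try ring
    have h3 : lam/2*δ ≤ lam/2*(c^2/(2*M)) := mul_le_mul_of_nonneg_left hδc (by positivity)
    have h4 : lam/2*(c^2/(2*M)) = c/2 := by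
      rw [hlamdef]; field_simp; try ring
    rw [hBdef]
    linarith [hmono, hcalc]
  -- oscillation bound via FTC
  have habs2 : ∀ p ∈ Set.Icc a (a+δ), ∀ q ∈ Set.Icc a (a+δ), p ≤ q →
      |h q t - h p t| ≤ B := by
    intro p hp q hq hpq
    have hp0 : 0 ≤ p := le_trans ha0 hp.1
    have hqL' : q ≤ L := le_trans hq.2 haL
    have hftc : (∫ ξ in p..q, hx ξ t) = h q t - h p t := by
      apply intervalIntegral.integral_eq_sub_of_hasDeriv_right_of_le hpq
      · exact hHc.mono (Set.Icc_subset_Icc hp0 hqL')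
      · intro ξ hξ
        have hξ0 : 0 < ξ := lt_of_le_of_lt hp0 hξ.1
        have hξL : ξ < L := lt_of_lt_of_le hξ.2 hqL'
        have hξI : ξ ∈ Set.Icc (0:ℝ) L := ⟨hξ0.le, hξL.le⟩
        have hopen : Set.Icc (0:ℝ) L ∈ nhds ξ := Icc_mem_nhds hξ0 hξL
        exact ((hHd ξ hξI).hasDerivAt hopen).hasDerivWithinAt
      · exact hII p q hp0 hpq hqL' _ hG_int
    rw [← hftc]
    have h5 : |∫ ξ in p..q, hx ξ t| ≤ ∫ ξ in p..q, |hx ξ t| :=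
      intervalIntegral.abs_integral_le_integral_abs hpq
    have hsplitB : B = (∫ ξ in a..p, |hx ξ t|) + (∫ ξ in p..q, |hx ξ t|)
        + ∫ ξ in q..(a+δ), |hx ξ t| := by
      rw [hBdef, intervalIntegral.integral_add_adjacent_intervals
          (hII a p ha0 hp.1 (le_trans hp.2 haL) _ habs_int)
          (hII p q hp0 hpq (le_trans hq.2 haL) _ habs_int),
        intervalIntegral.integral_add_adjacent_intervals
          (hII a q ha0 (le_trans hp.1 hpq) (le_trans hq.2 haL) _ habs_int)
          (hII q (a+δ) (le_trans hp0 hpq) hq.2 haL _ habs_int)]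
    have hs1 : 0 ≤ ∫ ξ in a..p, |hx ξ t| :=
      intervalIntegral.integral_nonneg hp.1 (fun u _ => abs_nonneg _)
    have hs2 : 0 ≤ ∫ ξ in q..(a+δ), |hx ξ t| :=
      intervalIntegral.integral_nonneg hq.2 (fun u _ => abs_nonneg _)
    linarith [h5]
  -- h is small on the whole small interval
  have hsmall : ∀ ξ ∈ Set.Icc a (a+δ), h ξ t ≤ 2*c := by
    intro ξ hξ
    rcases le_total ξ x₀ with hh | hh
    · have hb := habs2 ξ hξ x₀ hmem hh
      have := abs_le.1 hb
      linarith [this.2, this.1, hBle, hcon]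
    · have hb := habs2 x₀ hmem ξ hξ hh
      have := abs_le.1 hb
      linarith [this.2, this.1, hBle, hcon]
  -- energy lower bound on the small interval
  have hQpt : ∀ ξ ∈ Set.Icc a (a+δ), Amin * (ε^3/(6*(2*c)^3))
      ≤ A ξ * wettingPotential ε (h ξ t) + (1/2) * (hx ξ t)^2 := by
    intro ξ hξ
    have hξL : ξ ∈ Set.Icc (0:ℝ) L := hsub hξ
    have hW := wp_lb ε (h ξ t) (2*c) hε (hHpos ξ hξL) (hsmall ξ hξ) (by linarith)
    have hWpos : (0:ℝ) ≤ ε^3/(6*(2*c)^3) := by positivity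
    have h1 := hArange ξ hξL
    have h2 : Amin * (ε^3/(6*(2*c)^3)) ≤ A ξ * wettingPotential ε (h ξ t) :=
      mul_le_mul h1.1 hW hWpos (le_trans hAmin.le h1.1)
    nlinarith [sq_nonneg (hx ξ t)]
  have hQint : δ * (Amin * (ε^3/(6*(2*c)^3)))
      ≤ ∫ ξ in a..(a+δ), (A ξ * wettingPotential ε (h ξ t) + (1/2) * (hx ξ t)^2) := by
    have := intervalIntegral.integral_mono_on haδ intervalIntegrable_const
      (hII a (a+δ) ha0 haδ haL _ hf_int) hQpt
    rw [intervalIntegral.integral_const, smul_eq_mul] at this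
    have e : a + δ - a = δ := by ring
    rw [e] at this
    exact this
  -- the key numeric inequality
  have hfinal : M < δ * (Amin * (ε^3/(6*(2*c)^3))) := by
    have he48 : (6*(2*c)^3) = 48*c^3 := by ring
    rcases le_total (L/2) (c^2/(2*M)) with hmin | hmin
    · have hδeq : δ = L/2 := by rw [hδdef]; exact min_eq_left hmin
      have h1 : c^3 ≤ L*Amin*ε^3/(97*M) := by
        calc c^3 ≤ c₂^3 := pow_le_pow_left₀ hc.le hcc₂ 3
          _ = L*Amin*ε^3/(97*M) := hc₂cube
      have e : (L/2) * (Amin*(ε^3/(6*(2*c)^3))) = (L*Amin*ε^3)/(96*c^3) := by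
        field_simp; ring
      have h2 : c^3 * (97*M) ≤ L*Amin*ε^3 := (le_div_iff₀ (by positivity)).1 h1
      rw [hδeq, e, lt_div_iff₀ (by positivity)]
      nlinarith only [h2, mul_pos hM (pow_pos hc 3)]
    · have hδeq : δ = c^2/(2*M) := by rw [hδdef]; exact min_eq_right hmin
      have h1 : c * (97*M^2) ≤ Amin*ε^3 := by
        have := hcc₁.trans_eq hc₁def
        exact (le_div_iff₀ (by positivity)).1 this
      have e : (c^2/(2*M)) * (Amin*(ε^3/(6*(2*c)^3))) = (Amin*ε^3)/(96*M*c) := by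
        field_simp; ring
      rw [hδeq, e, lt_div_iff₀ (by positivity)]
      nlinarith only [h1, mul_pos (mul_pos hM hM) hc]
  -- combine everything
  have hsplitE : (∫ x in (0:ℝ)..L,
      (A x * wettingPotential ε (h x t) + (1/2) * (hx x t)^2))
      = (∫ ξ in (0:ℝ)..a, (A ξ * wettingPotential ε (h ξ t) + (1/2) * (hx ξ t)^2))
        + (∫ ξ in a..(a+δ), (A ξ * wettingPotential ε (h ξ t) + (1/2) * (hx ξ t)^2))
        + ∫ ξ in (a+δ)..L, (A ξ * wettingPotential ε (h ξ t) + (1/2) * (hx ξ t)^2) := by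
    rw [intervalIntegral.integral_add_adjacent_intervals
        (hII 0 a le_rfl ha0 (by linarith) _ hf_int)
        (hII a (a+δ) ha0 haδ haL _ hf_int),
      intervalIntegral.integral_add_adjacent_intervals
        (hII 0 (a+δ) le_rfl (by linarith) haL _ hf_int)
        (hII (a+δ) L (by linarith) haL le_rfl _ hf_int)]
  have hlow1 := hIntLb 0 a le_rfl ha0 (by linarith)
  have hlow3 := hIntLb (a+δ) L (by linarith) haL le_rfl
  have hAδ : 0 ≤ Amax/6 * δ := by positivity
  rw [hMdef] at hfinal
  linarith only [hE, hsplitE, hQint, hfinal, hlow1, hlow3, hE₀E₁, hAδ]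
end

section
/- Fix A > 0 and p > 0. For each sufficiently small ε > 0, let H_s(ε) ∈ (ε, 4ε/3) be the unique saddle root of A·Π_ε(H) = p in that interval, and suppose H(ε) ≥ 4ε/3 satisfies the first-integral relation A·(U_ε(H_s(ε)) − U_ε(H(ε))) = p·(H_s(ε) − H(ε)). Then H(ε) → A/(6p) as ε → 0⁺; that is, the maximum of the homoclinic droplet on a homogeneous substrate with wetting coefficient A and pressure p satisfies H_max = A/(6p) + O(ε). -/
set_option maxHeartbeats 2000000 in
theorem stmt_19 (A p : ℝ) (hA : 0 < A) (hp : 0 < p) (Hs H : ℝ → ℝ)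
    -- for sufficiently small ε, Hs ε is the saddle root of A·Π_ε = p in (ε, 4ε/3)
    (hHs : ∀ ε : ℝ, 0 < ε → p < 27*A/(256*ε) →
      Hs ε ∈ Set.Ioo ε (4*ε/3) ∧ A * disjoiningPressure ε (Hs ε) = p)
    -- H ε ≥ 4ε/3 satisfies the first-integral relation
    (hH : ∀ ε : ℝ, 0 < ε → p < 27*A/(256*ε) →
      4*ε/3 ≤ H ε ∧
      A * (wettingPotential ε (Hs ε) - wettingPotential ε (H ε)) =
        p * (Hs ε - H ε)) :
    Filter.Tendsto H (nhdsWithin 0 (Set.Ioi 0)) (nhds (A/(6*p))) := by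
  set c : ℝ := 5*A/(384*p) with hc
  have hcpos : 0 < c := by positivity
  set D : ℝ := 256*p/(81*A) with hDdef
  have hDpos : 0 < D := by positivity
  set C : ℝ := A/p * (D^2 + 1/(2*c^2)) with hCdef
  have hCpos : 0 < C := by positivity
  set T : ℝ := min (27*A/(256*p)) (1/(10*D)) with hTdef
  have hTpos : 0 < T := lt_min (by positivity) (by positivity)
  have key : ∀ ε ∈ Set.Ioo (0:ℝ) T,
      A/(6*p) - C*ε^2 ≤ H ε ∧ H ε ≤ A/(6*p) + (4/3)*ε := by
    intro ε hε
    obtain ⟨hε0, hεT'⟩ := hε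
    have hεT : ε < 27*A/(256*p) := lt_of_lt_of_le hεT' (min_le_left _ _)
    have hεD : ε < 1/(10*D) := lt_of_lt_of_le hεT' (min_le_right _ _)
    have hD2 : D^2*ε^2 ≤ 5/384 := by
      have h1 : D*ε < 1/10 := by
        rw [lt_div_iff₀ (by positivity)] at hεD
        linarith [hεD]
      nlinarith [mul_pos hDpos hε0]
    have hcond : p < 27*A/(256*ε) := by
      rw [lt_div_iff₀ (by positivity)]
      rw [lt_div_iff₀ (by positivity)] at hεT
      nlinarith
    obtain ⟨⟨hs1, hs2⟩, hsad⟩ := hHs ε hε0 hcond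
    obtain ⟨hH1, hint⟩ := hH ε hε0 hcond
    set s := Hs ε with hsdef
    set h := H ε with hhdef
    have hs0 : 0 < s := lt_trans hε0 hs1
    have hh0 : 0 < h := lt_of_lt_of_le (by linarith) hH1
    -- saddle equation cleared of denominators
    have e1 : A * ε^2 * (s - ε) = p * s^4 := by
      unfold disjoiningPressure at hsad
      field_simp at hsad
      have h3 : s^3 * (A * ε^2 * (s - ε)) = s^3 * (p * s^4) := by
        linear_combination s^3 * hsad
      exact mul_left_cancel₀ (pow_ne_zero 3 (ne_of_gt hs0)) h3
    -- Fact 1 : s - ε ≤ D ε²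
    have f1 : s - ε ≤ D * ε^2 := by
      have hs4 : s^4 ≤ (4*ε/3)^4 := by
        apply pow_le_pow_left₀ (le_of_lt hs0) (le_of_lt hs2)
      rw [hDdef]
      rw [div_mul_eq_mul_div, le_div_iff₀ (by positivity)]
      have h4 : p * s^4 ≤ p * (4*ε/3)^4 := by
        exact mul_le_mul_of_nonneg_left hs4 (le_of_lt hp)
      nlinarith [e1, h4, mul_pos hε0 hε0]
    -- U at s : identity and bounds
    set Us := wettingPotential ε s with hUsdef
    have idUs : Us = -1/6 + (s-ε)^2*(s+2*ε)/(6*s^3) := by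
      rw [hUsdef]
      unfold wettingPotential
      field_simp
      ring
    have Us_lb : -1/6 ≤ Us := by
      rw [idUs]
      have : 0 ≤ (s-ε)^2*(s+2*ε)/(6*s^3) := by positivity
      linarith
    have Us_ub : Us ≤ -1/6 + D^2 * ε^2 := by
      rw [idUs]
      have h1 : (s-ε)^2*(s+2*ε)/(6*s^3) ≤ D^2 * ε^2 := by
        rw [div_le_iff₀ (by positivity)]
        have hse : 0 ≤ s - ε := by linarith
        have hq : (s-ε)^2 ≤ (D*ε^2)^2 := by nlinarith
        have he3 : ε^3 ≤ s^3 := by nlinarith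
        have hA1 : (s-ε)^2*(s+2*ε) ≤ (D*ε^2)^2 * (10*ε/3) :=
          mul_le_mul hq (by linarith) (by linarith) (by positivity)
        have hA2 : (D*ε^2)^2*(10*ε/3) ≤ D^2*ε^2*(6*s^3) := by
          have hre : (D*ε^2)^2*(10*ε/3) = D^2*ε^2 * ((10/3)*ε^3) := by ring
          rw [hre]
          apply mul_le_mul_of_nonneg_left _ (by positivity)
          have : (0:ℝ) ≤ ε^3 := by positivity
          linarith
        linarith
      linarith
    -- U at h : bounds
    set Uh := wettingPotential ε h with hUhdef
    have Uh_ub : Uh ≤ 0 := by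
      rw [hUhdef]; unfold wettingPotential
      have key2 : -ε^2 / (2*h^2) + ε^3 / (3*h^3) = ε^2*(2*ε - 3*h)/(6*h^3) := by
        field_simp; ring
      rw [key2]
      apply div_nonpos_of_nonpos_of_nonneg
      · nlinarith
      · positivity
    have Uh_lb : -9/64 ≤ Uh := by
      rw [hUhdef]; unfold wettingPotential
      have key2 : -ε^2 / (2*h^2) + ε^3 / (3*h^3) + 9/64
          = (3*h - 4*ε)*(9*h^2 + 12*ε*h - 16*ε^2)/(192*h^3) := by
        field_simp; ring
      have hpos : 0 ≤ (3*h - 4*ε)*(9*h^2 + 12*ε*h - 16*ε^2)/(192*h^3) := by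
        apply div_nonneg _ (by positivity)
        apply mul_nonneg (by linarith)
        nlinarith
      linarith [key2 ▸ hpos]
    -- rearranged first integral
    have e2 : p * h = p * s + A * (Uh - Us) := by
      rw [hUsdef, hUhdef] at hint ⊢
      linarith
    -- Step 1 : h ≥ c
    have hc1 : c ≤ h := by
      have hgap : 5/384 ≤ Uh - Us := by linarith [Us_ub, Uh_lb, hD2]
      have hmul : A*(5/384) ≤ A*(Uh - Us) := mul_le_mul_of_nonneg_left hgap (le_of_lt hA)
      have hpc : p * c = 5*A/384 := by rw [hc]; field_simp
      have hps : 0 ≤ p * s := le_of_lt (mul_pos hp hs0)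
      have hfin : p * c ≤ p * h := by rw [e2, hpc]; linarith
      exact le_of_mul_le_mul_left hfin hp
    -- Step 2 : refined lower bound for Uh
    have Uh_lb2 : -(ε^2/(2*c^2)) ≤ Uh := by
      rw [hUhdef]; unfold wettingPotential
      have h1 : ε^2/(2*h^2) ≤ ε^2/(2*c^2) := by
        apply div_le_div_of_nonneg_left (by positivity) (by positivity)
        nlinarith
      have h2 : 0 ≤ ε^3/(3*h^3) := by positivity
      have h3 : -ε^2/(2*h^2) = -(ε^2/(2*h^2)) := by ring
      rw [h3]
      linarith
    constructor
    · -- lower bound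
      have : p * (A/(6*p) - C*ε^2) ≤ p * h := by
        rw [e2]
        have hexp : p * (A/(6*p) - C*ε^2) = A/6 - A*(D^2 + 1/(2*c^2))*ε^2 := by
          rw [hCdef]; field_simp
        rw [hexp]
        have hb : A * (Uh - Us) ≥ A * (-(ε^2/(2*c^2)) - (-1/6 + D^2*ε^2)) := by
          apply mul_le_mul_of_nonneg_left _ (le_of_lt hA)
          linarith
        have hps : 0 ≤ p * s := le_of_lt (mul_pos hp hs0)
        have hring : A * (-(ε^2/(2*c^2)) - (-1/6 + D^2*ε^2))
            = A/6 - A*(D^2 + 1/(2*c^2))*ε^2 := by ring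
        linarith [hb, hps, hring]
      exact le_of_mul_le_mul_left this hp
    · -- upper bound
      have : p * h ≤ p * (A/(6*p) + (4/3)*ε) := by
        rw [e2]
        have hexp : p * (A/(6*p) + (4/3)*ε) = A/6 + p*(4/3)*ε := by
          field_simp
        rw [hexp]
        have hb : A * (Uh - Us) ≤ A * (0 - (-1/6)) := by
          apply mul_le_mul_of_nonneg_left _ (le_of_lt hA)
          linarith
        have hps : p * s ≤ p * (4*ε/3) := by
          apply mul_le_mul_of_nonneg_left (le_of_lt hs2) (le_of_lt hp)
        nlinarith [hb]
      exact le_of_mul_le_mul_left this hp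
  -- squeeze
  have hmem : Set.Ioo (0:ℝ) T ∈ nhdsWithin (0:ℝ) (Set.Ioi 0) :=
    Ioo_mem_nhdsGT_of_mem (by constructor <;> simp [hTpos])
  have hlow : Filter.Tendsto (fun ε : ℝ => A/(6*p) - C*ε^2)
      (nhdsWithin 0 (Set.Ioi 0)) (nhds (A/(6*p))) := by
    have hcont : Filter.Tendsto (fun ε : ℝ => A/(6*p) - C*ε^2) (nhds 0)
        (nhds (A/(6*p))) := by
      have := (Continuous.tendsto (by continuity :
          Continuous fun ε : ℝ => A/(6*p) - C*ε^2) 0)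
      simpa using this
    exact hcont.mono_left nhdsWithin_le_nhds
  have hup : Filter.Tendsto (fun ε : ℝ => A/(6*p) + (4/3)*ε)
      (nhdsWithin 0 (Set.Ioi 0)) (nhds (A/(6*p))) := by
    have hcont : Filter.Tendsto (fun ε : ℝ => A/(6*p) + (4/3)*ε) (nhds 0)
        (nhds (A/(6*p))) := by
      have := (Continuous.tendsto (by continuity :
          Continuous fun ε : ℝ => A/(6*p) + (4/3)*ε) 0)
      simpa using this
    exact hcont.mono_left nhdsWithin_le_nhds
  refine tendsto_of_tendsto_of_tendsto_of_le_of_le' hlow hup ?_ ?_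
  · filter_upwards [hmem] with ε hε using (key ε hε).1
  · filter_upwards [hmem] with ε hε using (key ε hε).2
end
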